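/- For every integer r ≥ 3 there exists a nonempty finite simple r-regular graph that contains no 3-cycles and no 4-cycles (i.e., it has girth at least 5). -/

import Mathlib

open SimpleGraph

/-- The number of `k`-cycle subgraphs of `G`: each `k`-cycle subgraph corresponds to exactly
`2 * k` rooted closed walks that are cycles of length `k`. -/
noncomputable def cycleCount {V : Type*} (G : SimpleGraph V) (k : ℕ) : ℕ :=
  Nat.card ((x : V) × {p : G.Walk x x // p.IsCycle ∧ p.length = k}) / (2 * k)

/-- A graph is `r`-regular if every vertex has exactly `r` neighbors. -/
def IsRegularGraph {V : Type*} (G : SimpleGraph V) (r : ℕ) : Prop :=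
  ∀ v : V, Nat.card (G.neighborSet v) = r

/-! ### Auxiliary lemmas: powers of 3 form a Sidon set -/

lemma pow3_one_le (c : ℕ) : 1 ≤ 3^c := Nat.one_le_pow _ _ (by norm_num)

lemma pow3_zero_case (b c d : ℕ) (h : 1 + 3^b = 3^c + 3^d) :
    (0 = c ∧ b = d) ∨ (0 = d ∧ b = c) := by
  have h3 : ∀ x : ℕ, 0 < x → 3 ∣ 3^x := fun x hx => dvd_pow_self 3 hx.ne'
  rcases Nat.eq_zero_or_pos b with hb | hb
  · subst hb
    rcases Nat.eq_zero_or_pos c with hc | hc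
    · subst hc
      simp only [pow_zero] at h
      rcases Nat.eq_zero_or_pos d with hd | hd
      · subst hd; left; exact ⟨rfl, rfl⟩
      · have := h3 d hd; have := pow3_one_le d; omega
    · rcases Nat.eq_zero_or_pos d with hd | hd
      · subst hd
        simp only [pow_zero] at h
        rcases Nat.eq_zero_or_pos c with hc' | hc'
        · subst hc'; right; exact ⟨rfl, rfl⟩
        · have := h3 c hc'; have := pow3_one_le c; omega
      · have := h3 c hc; have := h3 d hd
        simp only [pow_zero] at h; omega
  · have hb3 := h3 b hb
    rcases Nat.eq_zero_or_pos c with hc | hc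
    · subst hc
      simp only [pow_zero] at h
      have : (3:ℕ)^b = 3^d := by omega
      left; exact ⟨rfl, Nat.pow_right_injective (by norm_num) this⟩
    · rcases Nat.eq_zero_or_pos d with hd | hd
      · subst hd
        simp only [pow_zero] at h
        have : (3:ℕ)^b = 3^c := by omega
        right; exact ⟨rfl, Nat.pow_right_injective (by norm_num) this⟩
      · have := h3 c hc; have := h3 d hd; omega

lemma pow3_sidon_aux : ∀ N a b c d : ℕ, a + b + c + d ≤ N → 3^a + 3^b = 3^c + 3^d →
    (a = c ∧ b = d) ∨ (a = d ∧ b = c) := by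
  intro N
  induction N with
  | zero =>
    intro a b c d hle h
    have ha : a = 0 := by omega
    have hb : b = 0 := by omega
    have hc : c = 0 := by omega
    have hd : d = 0 := by omega
    subst ha; subst hb; subst hc; subst hd; left; exact ⟨rfl, rfl⟩
  | succ N ih =>
    intro a b c d hle h
    rcases Nat.eq_zero_or_pos a with ha | ha
    · subst ha
      simp only [pow_zero] at h
      have := pow3_zero_case b c d h
      omega
    · rcases Nat.eq_zero_or_pos b with hb | hb
      · subst hb
        simp only [pow_zero] at h
        have h' : 1 + 3^a = 3^c + 3^d := by omega
        have := pow3_zero_case a c d h'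
        omega
      · rcases Nat.eq_zero_or_pos c with hc | hc
        · subst hc
          simp only [pow_zero] at h
          have h' : 1 + 3^d = 3^a + 3^b := by omega
          have := pow3_zero_case d a b h'
          omega
        · rcases Nat.eq_zero_or_pos d with hd | hd
          · subst hd
            simp only [pow_zero] at h
            have h' : 1 + 3^c = 3^a + 3^b := by omega
            have := pow3_zero_case c a b h'
            omega
          · have e : ∀ x : ℕ, 0 < x → 3^x = 3 * 3^(x-1) := by
              intro x hx
              conv_lhs => rw [show x = (x-1)+1 by omega]
              ring
            rw [e a ha, e b hb, e c hc, e d hd] at h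
            have h' : 3^(a-1) + 3^(b-1) = 3^(c-1) + 3^(d-1) := by omega
            have := ih (a-1) (b-1) (c-1) (d-1) (by omega) h'
            omega

lemma pow3_sidon (a b c d : ℕ) (h : 3^a + 3^b = 3^c + 3^d) :
    (a = c ∧ b = d) ∨ (a = d ∧ b = c) :=
  pow3_sidon_aux (a+b+c+d) a b c d le_rfl h

/-! ### The graph -/

/-- The bipartite graph on `ZMod 2 × ZMod 3^r` where `(a, x)` is joined to `(b, y)`
iff `a ≠ b` and `x + y` is a power of `3` with exponent `< r`. -/
def myGraph (r : ℕ) : SimpleGraph (ZMod 2 × ZMod (3^r)) where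
  Adj a b := a.1 ≠ b.1 ∧ ∃ i < r, a.2 + b.2 = ((3^i : ℕ) : ZMod (3^r))
  symm := ⟨by
    rintro a b ⟨h1, i, hi, h2⟩
    exact ⟨h1.symm, i, hi, by rw [add_comm]; exact h2⟩⟩
  loopless := ⟨fun a h => h.1 rfl⟩

lemma zmod2_ne (a b : ZMod 2) (h : a ≠ b) : b = a + 1 := by revert a b; decide

lemma zmod2_trans (a b c : ZMod 2) (h1 : a ≠ b) (h2 : b ≠ c) : a = c := by
  revert a b c; decide

lemma cast_inj_pow3 (r : ℕ) (hr : 1 ≤ r) {i j k l : ℕ} (hi : i < r) (hj : j < r)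
    (hk : k < r) (hl : l < r)
    (h : ((3^i : ℕ) : ZMod (3^r)) + ((3^k : ℕ) : ZMod (3^r))
       = ((3^j : ℕ) : ZMod (3^r)) + ((3^l : ℕ) : ZMod (3^r))) :
    (i = j ∧ k = l) ∨ (i = l ∧ k = j) := by
  haveI : NeZero (3^r) := ⟨(pow_pos (by norm_num : (0:ℕ) < 3) r).ne'⟩
  have hb : ∀ m : ℕ, m < r → 3^m ≤ 3^(r-1) := fun m hm =>
    Nat.pow_le_pow_right (by norm_num) (by omega)
  have h3 : (3:ℕ)^r = 3 * 3^(r-1) := by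
    conv_lhs => rw [show r = (r-1)+1 by omega]
    ring
  have h1 : 3^i + 3^k < 3^r := by
    have := hb i hi; have := hb k hk; have := pow3_one_le (r-1); omega
  have h2 : 3^j + 3^l < 3^r := by
    have := hb j hj; have := hb l hl; have := pow3_one_le (r-1); omega
  have hcast : ((3^i + 3^k : ℕ) : ZMod (3^r)) = ((3^j + 3^l : ℕ) : ZMod (3^r)) := by
    rw [Nat.cast_add, Nat.cast_add]; exact h
  have : (3:ℕ)^i + 3^k = 3^j + 3^l := by
    have := congrArg ZMod.val hcast
    rwa [ZMod.val_cast_of_lt h1, ZMod.val_cast_of_lt h2] at this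
  exact pow3_sidon i k j l this

lemma myGraph_parity (r : ℕ) {u v : ZMod 2 × ZMod (3^r)} (p : (myGraph r).Walk u v) :
    v.1 = u.1 + (p.length : ZMod 2) := by
  induction p with
  | nil => simp
  | @cons u w v h q ih =>
    have hw : w.1 = u.1 + 1 := zmod2_ne _ _ h.1
    rw [Walk.length_cons, ih, hw]
    push_cast
    ring

lemma myGraph_regular (r : ℕ) (hr : 1 ≤ r) (v : ZMod 2 × ZMod (3^r)) :
    Nat.card ((myGraph r).neighborSet v) = r := by
  haveI : NeZero (3^r) := ⟨(pow_pos (by norm_num : (0:ℕ) < 3) r).ne'⟩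
  have hmem : ∀ i : Fin r,
      ((v.1 + 1, ((3^(i:ℕ) : ℕ) : ZMod (3^r)) - v.2) : ZMod 2 × ZMod (3^r))
        ∈ (myGraph r).neighborSet v := by
    intro i
    refine ⟨?_, (i:ℕ), i.2, ?_⟩
    · have : ∀ a : ZMod 2, a ≠ a + 1 := by decide
      exact this v.1
    · simp
  set f : Fin r → (myGraph r).neighborSet v := fun i => ⟨_, hmem i⟩ with hf
  have hinj : Function.Injective f := by
    intro i j hij
    have h2 : ((3^(i:ℕ) : ℕ) : ZMod (3^r)) - v.2 = ((3^(j:ℕ) : ℕ) : ZMod (3^r)) - v.2 :=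
      congrArg (fun w => (w : ZMod 2 × ZMod (3^r)).2) (congrArg Subtype.val hij)
    have h3 : ((3^(i:ℕ) : ℕ) : ZMod (3^r)) = ((3^(j:ℕ) : ℕ) : ZMod (3^r)) := by
      have := sub_left_injective h2; exact this
    have hlt : ∀ m : ℕ, m < r → 3^m < 3^r := fun m hm =>
      Nat.pow_lt_pow_right (by norm_num) hm
    have h4 : (3:ℕ)^(i:ℕ) = 3^(j:ℕ) := by
      have := congrArg ZMod.val h3
      rwa [ZMod.val_cast_of_lt (hlt _ i.2), ZMod.val_cast_of_lt (hlt _ j.2)] at this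
    exact Fin.ext (Nat.pow_right_injective (by norm_num) h4)
  have hsurj : Function.Surjective f := by
    rintro ⟨w, hw⟩
    obtain ⟨hne, i, hi, heq⟩ := hw
    refine ⟨⟨i, hi⟩, Subtype.ext (Prod.ext ?_ ?_)⟩
    · exact (zmod2_ne v.1 w.1 hne).symm
    · exact (eq_sub_of_add_eq' heq).symm
  have := Nat.card_eq_of_bijective f ⟨hinj, hsurj⟩
  simpa using this.symm

lemma myGraph_no_C3 (r : ℕ) :
    IsEmpty ((x : ZMod 2 × ZMod (3^r)) ×
      {p : (myGraph r).Walk x x // p.IsCycle ∧ p.length = 3}) := by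
  constructor
  rintro ⟨x, p, hc, hl⟩
  have hpar := myGraph_parity r p
  rw [hl] at hpar
  have : ∀ a : ZMod 2, a = a + ((3:ℕ) : ZMod 2) → False := by decide
  exact this x.1 hpar

lemma myGraph_no_C4 (r : ℕ) (hr : 1 ≤ r) :
    IsEmpty ((x : ZMod 2 × ZMod (3^r)) ×
      {p : (myGraph r).Walk x x // p.IsCycle ∧ p.length = 4}) := by
  constructor
  rintro ⟨x, p, hc, hl⟩
  cases p with
  | nil => simp at hl
  | @cons _ a _ h1 p1 =>
  cases p1 with
  | nil => simp at hl
  | @cons _ b _ h2 p2 =>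
  cases p2 with
  | nil => simp at hl
  | @cons _ c _ h3 p3 =>
  cases p3 with
  | nil => simp at hl
  | @cons _ d _ h4 p4 =>
  cases p4 with
  | cons h5 p5 => simp [Walk.length_cons] at hl
  | nil =>
    have hs := hc.support_nodup
    simp [Walk.support_cons, Walk.support_nil, List.nodup_cons] at hs
    obtain ⟨hne1, i, hi, e1⟩ := h1
    obtain ⟨hne2, j, hj, e2⟩ := h2
    obtain ⟨hne3, k, hk, e3⟩ := h3
    obtain ⟨hne4, l, hl', e4⟩ := h4
    have hsum : ((3^i : ℕ) : ZMod (3^r)) + ((3^k : ℕ) : ZMod (3^r))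
        = ((3^j : ℕ) : ZMod (3^r)) + ((3^l : ℕ) : ZMod (3^r)) := by
      rw [← e1, ← e2, ← e3, ← e4]; ring
    rcases cast_inj_pow3 r hr hi hj hk hl' hsum with ⟨hij, -⟩ | ⟨hil, -⟩
    · subst hij
      have hxb2 : x.2 = b.2 := by
        have : x.2 + a.2 = a.2 + b.2 := by rw [e1, e2]
        have := this.trans (add_comm a.2 b.2)
        exact add_right_cancel this
      have hxb1 : x.1 = b.1 := zmod2_trans _ _ _ hne1 hne2
      exact hs.2.1.2 (Prod.ext hxb1.symm hxb2.symm)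
    · subst hil
      have hac2 : a.2 = c.2 := by
        have : x.2 + a.2 = c.2 + x.2 := by rw [e1, e4]
        have := this.trans (add_comm c.2 x.2)
        exact add_left_cancel this
      have hac1 : a.1 = c.1 := zmod2_trans _ _ _ hne2 hne3
      exact hs.1.2.1 (Prod.ext hac1 hac2)

/-- For every `r ≥ 3` there is a nonempty finite simple `r`-regular graph with no `3`-cycles
and no `4`-cycles (i.e. of girth at least 5). -/
theorem exists_regular_graph_girth_ge_five (r : ℕ) (hr : 3 ≤ r) :
    ∃ (V : Type) (G : SimpleGraph V), Finite V ∧ Nonempty V ∧ IsRegularGraph G r ∧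
      cycleCount G 3 = 0 ∧ cycleCount G 4 = 0 := by
  haveI : NeZero (3^r) := ⟨(pow_pos (by norm_num : (0:ℕ) < 3) r).ne'⟩
  refine ⟨ZMod 2 × ZMod (3^r), myGraph r, inferInstance, inferInstance,
    fun v => myGraph_regular r (by omega) v, ?_, ?_⟩
  · unfold cycleCount
    haveI := myGraph_no_C3 r
    rw [Nat.card_of_isEmpty, Nat.zero_div]
  · unfold cycleCount
    haveI := myGraph_no_C4 r (by omega)
    rw [Nat.card_of_isEmpty, Nat.zero_div]
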